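/- Let Λ be an Artinian algebra and M a finitely generated, faithful, indecomposable Λ-module. If M is torsionless, then M is projective. -/

import Mathlib

universe u

/-- `M` is indecomposable: nonzero and admits no nontrivial direct sum decomposition. -/
def IsIndecomposableModule (Λ : Type u) [Ring Λ] (M : Type u) [AddCommGroup M]
    [Module Λ M] : Prop :=
  Nontrivial M ∧ ∀ A B : Submodule Λ M, IsCompl A B → A = ⊥ ∨ B = ⊥

/-- `M` is torsionless: it embeds into a finitely generated free module. -/
def IsTorsionless (Λ : Type u) [Ring Λ] (M : Type u) [AddCommGroup M]
    [Module Λ M] : Prop :=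
  ∃ (n : ℕ) (f : M →ₗ[Λ] (Fin n → Λ)), Function.Injective f

theorem stmt4 (K : Type u) [Field K] (Λ : Type u) [Ring Λ] [Algebra K Λ]
    [FiniteDimensional K Λ]
    (M : Type u) [AddCommGroup M] [Module Λ M] [Module.Finite Λ M]
    (hfaith : Module.annihilator Λ M = ⊥)
    (hind : IsIndecomposableModule Λ M) (htl : IsTorsionless Λ M) :
    Module.Projective Λ M := by
  classical
  obtain ⟨hnontriv, hsplit⟩ := hind
  obtain ⟨n, F, hF⟩ := htl
  -- set up the K-module structure on M
  letI instKM : Module K M := Module.compHom M (algebraMap K Λ)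
  haveI : IsScalarTower K Λ M := by
    constructor
    intro k l x
    show (k • l) • x = (algebraMap K Λ k) • (l • x)
    rw [Algebra.smul_def, mul_smul]
  haveI : SMulCommClass Λ K M := by
    constructor
    intro l k x
    show l • (algebraMap K Λ k) • x = (algebraMap K Λ k) • (l • x)
    rw [← mul_smul, ← mul_smul, Algebra.commutes]
  haveI : Module.Finite K M := Module.Finite.trans Λ M
  haveI : IsNoetherian Λ M := isNoetherian_of_tower K inferInstance
  haveI : IsArtinian Λ M := isArtinian_of_tower K inferInstance
  haveI : IsArtinianRing Λ := isArtinian_of_tower K inferInstance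
  haveI : IsNoetherian (Module.End Λ M) M := isNoetherian_of_tower K inferInstance
  haveI : IsArtinian (Module.End Λ M) M := isArtinian_of_tower K inferInstance
  -- basic facts about `End Λ M`
  have hinj_unit : ∀ f : Module.End Λ M, Function.Injective f → IsUnit f := fun f hf =>
    (Module.End.isUnit_iff f).mpr (IsArtinian.bijective_of_injective_endomorphism f hf)
  have hnotinj : ∀ f : Module.End Λ M, ¬ IsUnit f → ¬ Function.Injective f :=
    fun f hf hinj => hf (hinj_unit f hinj)
  have hzero : ¬ IsUnit (0 : Module.End Λ M) := by
    intro h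
    obtain ⟨x, y, hxy⟩ := hnontriv
    exact hxy (((Module.End.isUnit_iff _).mp h).injective (by simp))
  -- Fitting: non-units are nilpotent
  have hnil : ∀ f : Module.End Λ M, ¬ IsUnit f → IsNilpotent f := by
    intro f hf
    have hni := hnotinj f hf
    obtain ⟨a, ha⟩ := Filter.eventually_atTop.mp (LinearMap.eventually_isCompl_ker_pow_range_pow f)
    have hc := ha (a + 1) (Nat.le_succ a)
    rcases hsplit _ _ hc with hk | hr
    · exfalso
      apply hni
      have hik : Function.Injective ⇑(f ^ (a + 1)) := LinearMap.ker_eq_bot.mp hk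
      intro x y hxy
      apply hik
      show (f ^ (a + 1)) x = (f ^ (a + 1)) y
      rw [pow_succ, Module.End.mul_apply, Module.End.mul_apply, hxy]
    · exact ⟨a + 1, LinearMap.range_eq_bot.mp hr⟩
  have hone_sub : ∀ f : Module.End Λ M, ¬ IsUnit f → IsUnit (1 - f) := fun f hf =>
    (hnil f hf).isUnit_one_sub
  -- non-units form a two-sided ideal
  have hmul_left : ∀ (e f : Module.End Λ M), ¬ IsUnit f → ¬ IsUnit (e * f) := by
    intro e f hf hu
    apply hnotinj f hf
    intro x y hxy
    apply ((Module.End.isUnit_iff _).mp hu).injective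
    show (e * f) x = (e * f) y
    rw [Module.End.mul_apply, Module.End.mul_apply, hxy]
  have hmul_right : ∀ (f e : Module.End Λ M), ¬ IsUnit f → ¬ IsUnit (f * e) := by
    intro f e hf hu
    have he : Function.Injective e := by
      intro x y hxy
      apply ((Module.End.isUnit_iff _).mp hu).injective
      show (f * e) x = (f * e) y
      rw [Module.End.mul_apply, Module.End.mul_apply, hxy]
    have heu := hinj_unit e he
    apply hf
    have : f = (f * e) * ↑heu.unit⁻¹ := by
      rw [mul_assoc, heu.mul_val_inv, mul_one]
    rw [this]
    exact hu.mul heu.unit⁻¹.isUnit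
  have hadd : ∀ f g : Module.End Λ M, ¬ IsUnit f → ¬ IsUnit g → ¬ IsUnit (f + g) := by
    intro f g hf hg hu
    have ha : ¬ IsUnit ((↑hu.unit⁻¹ : Module.End Λ M) * f) := by
      intro h
      apply hf
      have : f = (↑hu.unit : Module.End Λ M) * ((↑hu.unit⁻¹ : Module.End Λ M) * f) := by
        rw [← mul_assoc, Units.mul_inv, one_mul]
      rw [this]
      exact hu.unit.isUnit.mul h
    have hgu : IsUnit ((↑hu.unit⁻¹ : Module.End Λ M) * g) := by
      have h1 : (1 : Module.End Λ M) - (↑hu.unit⁻¹ : Module.End Λ M) * f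
          = (↑hu.unit⁻¹ : Module.End Λ M) * g := by
        have : (↑hu.unit⁻¹ : Module.End Λ M) * (f + g) = 1 := hu.val_inv_mul
        rw [mul_add] at this
        rw [← this, add_sub_cancel_left]
      rw [← h1]
      exact hone_sub _ ha
    apply hg
    have : g = (↑hu.unit : Module.End Λ M) * ((↑hu.unit⁻¹ : Module.End Λ M) * g) := by
      rw [← mul_assoc, Units.mul_inv, one_mul]
    rw [this]
    exact hu.unit.isUnit.mul hgu
  -- the ideal of non-units
  set mI : Ideal (Module.End Λ M) :=
    { carrier := {f | ¬ IsUnit f}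
      add_mem' := fun hf hg => hadd _ _ hf hg
      zero_mem' := hzero
      smul_mem' := fun c x hx => by
        show ¬ IsUnit (c * x)
        exact hmul_left c x hx } with hmI
  have hmI_mem : ∀ f : Module.End Λ M, f ∈ mI ↔ ¬ IsUnit f := fun f => Iff.rfl
  -- powers of mI acting on M
  set N : ℕ → Submodule (Module.End Λ M) M :=
    fun b => (fun P : Submodule (Module.End Λ M) M => mI • P)^[b] ⊤ with hN
  have hNsucc : ∀ b, N (b + 1) = mI • N b := fun b => Function.iterate_succ_apply' _ _ _
  have hstep : ∀ P : Submodule (Module.End Λ M) M, mI • P ≤ P :=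
    fun P => Submodule.smul_le.mpr fun a _ x hx => P.smul_mem a hx
  have hNle : ∀ b, N (b + 1) ≤ N b := fun b => by rw [hNsucc]; exact hstep _
  -- stabilization
  obtain ⟨b, hb⟩ := IsArtinian.monotone_stabilizes
    (⟨fun b => OrderDual.toDual (N b), fun i j hij => by
      simp only [OrderDual.toDual_le_toDual]
      exact antitone_nat_of_succ_le hNle hij⟩ : ℕ →o (Submodule (Module.End Λ M) M)ᵒᵈ)
  have hbsucc : N b = N (b + 1) := hb (b + 1) (Nat.le_succ b)
  -- Nakayama
  have nak : ∀ (r : ℕ) (s : Finset M), s.card ≤ r →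
      Submodule.span (Module.End Λ M) (s : Set M) ≤
        mI • Submodule.span (Module.End Λ M) (s : Set M) →
      Submodule.span (Module.End Λ M) (s : Set M) = ⊥ := by
    intro r
    induction r with
    | zero =>
      intro s hs _
      rw [Finset.card_eq_zero.mp (Nat.le_zero.mp hs)]
      simp
    | succ r ih =>
      intro s hcard hle
      rcases s.eq_empty_or_nonempty with rfl | ⟨x, hx⟩
      · simp
      · have hst : (s : Set M) = insert x ((s.erase x : Finset M) : Set M) := by
          rw [← Finset.coe_insert, Finset.insert_erase hx]
        have hsub : Submodule.span (Module.End Λ M) (s : Set M)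
            = Submodule.span (Module.End Λ M) {x}
              ⊔ Submodule.span (Module.End Λ M) ((s.erase x : Finset M) : Set M) := by
          rw [hst, Submodule.span_insert]
        have hxmem : x ∈ mI • Submodule.span (Module.End Λ M) (s : Set M) :=
          hle (Submodule.subset_span hx)
        rw [hsub, Submodule.smul_sup] at hxmem
        obtain ⟨y, hy, z, hz, hxyz⟩ := Submodule.mem_sup.mp hxmem
        have hextract : ∃ a ∈ mI, y = a • x := by
          refine Submodule.smul_induction_on hy ?_ ?_
          · intro a ha m hm
            obtain ⟨e, rfl⟩ := Submodule.mem_span_singleton.mp hm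
            exact ⟨a * e, hmul_right a e ha, (mul_smul a e x).symm⟩
          · rintro m1 m2 ⟨a, ha, rfl⟩ ⟨c, hc, rfl⟩
            exact ⟨a + c, hadd _ _ ha hc, (add_smul a c x).symm⟩
        obtain ⟨a, ha, rfl⟩ := hextract
        have hz' : z ∈ Submodule.span (Module.End Λ M) ((s.erase x : Finset M) : Set M) :=
          hstep _ hz
        have hxt : x ∈ Submodule.span (Module.End Λ M) ((s.erase x : Finset M) : Set M) := by
          have hz2 : z = x - a • x := by
            rw [eq_sub_iff_add_eq']
            exact hxyz
          have h1 : ((1 : Module.End Λ M) - a) • x = z := by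
            rw [sub_smul, one_smul, hz2]
          obtain ⟨u, hu⟩ := hone_sub a ha
          have hxz : x = (↑u⁻¹ : Module.End Λ M) • z := by
            rw [← h1, ← hu, ← mul_smul, Units.inv_mul, one_smul]
          have hmem2 := Submodule.smul_mem
            (Submodule.span (Module.End Λ M) ((s.erase x : Finset M) : Set M))
            ((↑u⁻¹ : Module.End Λ M)) hz'
          rwa [← hxz] at hmem2
        have hspan_eq : Submodule.span (Module.End Λ M) (s : Set M)
            = Submodule.span (Module.End Λ M) ((s.erase x : Finset M) : Set M) := by
          refine le_antisymm ?_ (Submodule.span_mono (by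
            intro y hy
            exact Finset.erase_subset x s hy))
          rw [hsub]
          refine sup_le ?_ le_rfl
          rw [Submodule.span_le, Set.singleton_subset_iff]
          exact hxt
        have hcard' : (s.erase x).card ≤ r := by
          have := Finset.card_erase_of_mem hx
          omega
        have hle' : Submodule.span (Module.End Λ M) ((s.erase x : Finset M) : Set M) ≤
            mI • Submodule.span (Module.End Λ M) ((s.erase x : Finset M) : Set M) := by
          rw [← hspan_eq]
          exact hle
        rw [hspan_eq]
        exact ih (s.erase x) hcard' hle'
  -- N b = ⊥
  have hNb : N b = ⊥ := by
    obtain ⟨sfin, hsfin⟩ := IsNoetherian.noetherian (N b)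
    have hle : Submodule.span (Module.End Λ M) (sfin : Set M) ≤
        mI • Submodule.span (Module.End Λ M) (sfin : Set M) := by
      rw [hsfin]
      exact le_of_eq (hbsucc.trans (hNsucc b))
    rw [← hsfin]
    exact nak sfin.card sfin le_rfl hle
  -- words of non-units of length b annihilate M
  have hword : ∀ w : List (Module.End Λ M), (∀ a ∈ w, ¬ IsUnit a) →
      ∀ x : M, w.prod • x ∈ N w.length := by
    intro w
    induction w with
    | nil =>
      intro _ x
      show (1 : Module.End Λ M) • x ∈ N 0
      simp [hN]
    | cons a w ih =>
      intro hw x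
      rw [List.prod_cons, mul_smul, List.length_cons, hNsucc]
      exact Submodule.smul_mem_smul (hw a List.mem_cons_self)
        (ih (fun c hc => hw c (List.mem_cons_of_mem a hc)) x)
  -- finitely many elements with trivial joint annihilator
  obtain ⟨s, hsJ⟩ : ∃ s : Finset M,
      (⨅ x ∈ s, LinearMap.ker (LinearMap.toSpanSingleton Λ M x)) = ⊥ := by
    obtain ⟨J, ⟨s, rfl⟩, hmin⟩ := IsArtinian.set_has_minimal
      (Set.range (fun s : Finset M => ⨅ x ∈ s, LinearMap.ker (LinearMap.toSpanSingleton Λ M x)))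
      ⟨⨅ x ∈ (∅ : Finset M), LinearMap.ker (LinearMap.toSpanSingleton Λ M x), ⟨∅, rfl⟩⟩
    refine ⟨s, ?_⟩
    have hJle : ∀ y : M, (⨅ x ∈ s, LinearMap.ker (LinearMap.toSpanSingleton Λ M x))
        ≤ LinearMap.ker (LinearMap.toSpanSingleton Λ M y) := by
      intro y
      have hIle : (⨅ x ∈ insert y s, LinearMap.ker (LinearMap.toSpanSingleton Λ M x))
          ≤ ⨅ x ∈ s, LinearMap.ker (LinearMap.toSpanSingleton Λ M x) := by
        refine le_iInf fun x => le_iInf fun hxs => ?_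
        exact iInf_le_of_le x (iInf_le_of_le (Finset.mem_insert_of_mem hxs) le_rfl)
      have heq : (⨅ x ∈ insert y s, LinearMap.ker (LinearMap.toSpanSingleton Λ M x))
          = ⨅ x ∈ s, LinearMap.ker (LinearMap.toSpanSingleton Λ M x) := by
        by_contra hne
        exact hmin _ ⟨insert y s, rfl⟩ (lt_of_le_of_ne hIle hne)
      rw [← heq]
      exact iInf_le_of_le y (iInf_le_of_le (Finset.mem_insert_self y s) le_rfl)
    refine le_bot_iff.mp ?_
    intro l hl
    rw [← hfaith]
    refine Module.mem_annihilator.mpr fun m => ?_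
    have := hJle m hl
    rwa [LinearMap.mem_ker, LinearMap.toSpanSingleton_apply] at this
  -- the key family of endomorphisms
  by_cases hcase : ∃ (i : Fin n) (x : M), x ∈ s ∧
      IsUnit ((LinearMap.toSpanSingleton Λ M x).comp
        ((LinearMap.proj i).comp F) : Module.End Λ M)
  · -- a unit: proj i ∘ F is a split mono
    obtain ⟨i, x, _, hu⟩ := hcase
    refine Module.Projective.of_split ((LinearMap.proj i).comp F)
      ((↑hu.unit⁻¹ : Module.End Λ M).comp (LinearMap.toSpanSingleton Λ M x)) ?_
    have hassoc : ((↑hu.unit⁻¹ : Module.End Λ M).comp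
        (LinearMap.toSpanSingleton Λ M x)).comp ((LinearMap.proj i).comp F)
        = (↑hu.unit⁻¹ : Module.End Λ M) * ↑hu.unit := by
      rw [LinearMap.comp_assoc, hu.unit_spec]
      rfl
    rw [hassoc, Units.inv_mul]
    rfl
  · -- no unit: contradiction with faithfulness
    exfalso
    push_neg at hcase
    have key : ∀ z : M, z = 0 := by
      have hB : ∀ (c : ℕ) (z : M),
          (∀ w : List (Module.End Λ M), w.length = c →
            (∀ a ∈ w, ∃ (i : Fin n) (x : M), x ∈ s ∧
              a = (LinearMap.toSpanSingleton Λ M x).comp ((LinearMap.proj i).comp F)) →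
            w.prod • z = 0) → z = 0 := by
        intro c
        induction c with
        | zero =>
          intro z hz
          have := hz [] rfl (by simp)
          simpa using this
        | succ c ih =>
          intro z hz
          have hz0 : ∀ (i : Fin n) (x : M), x ∈ s →
              ((LinearMap.toSpanSingleton Λ M x).comp ((LinearMap.proj i).comp F)) z = 0 := by
            intro i x hxs
            apply ih
            intro w hw hwmem
            have hzz := hz (w ++ [(LinearMap.toSpanSingleton Λ M x).comp
              ((LinearMap.proj i).comp F)]) (by simp [hw]) ?_
            · rwa [List.prod_append, List.prod_singleton, mul_smul] at hzz
            · intro a ha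
              rcases List.mem_append.mp ha with h | h
              · exact hwmem a h
              · exact ⟨i, x, hxs, List.mem_singleton.mp h⟩
          have hFz : ∀ i : Fin n, F z i = 0 := by
            intro i
            have hmem : F z i ∈ (⨅ x ∈ s, LinearMap.ker (LinearMap.toSpanSingleton Λ M x)) := by
              refine Submodule.mem_iInf _ |>.mpr fun x => Submodule.mem_iInf _ |>.mpr fun hxs => ?_
              rw [LinearMap.mem_ker, LinearMap.toSpanSingleton_apply]
              have := hz0 i x hxs
              simpa [LinearMap.comp_apply, LinearMap.toSpanSingleton_apply] using this
            rw [hsJ] at hmem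
            exact hmem
          apply hF
          rw [map_zero]
          funext i
          exact hFz i
      intro z
      apply hB b z
      intro w hw hwmem
      have hwnu : ∀ a ∈ w, ¬ IsUnit a := by
        intro a ha
        obtain ⟨i, x, hxs, rfl⟩ := hwmem a ha
        exact hcase i x hxs
      have := hword w hwnu z
      rw [hw, hNb] at this
      simpa using this
    obtain ⟨x, y, hxy⟩ := hnontriv
    exact hxy ((key x).trans (key y).symm)
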